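/- Let M ≥ 0, 0 ≤ α ≤ min{1, 2/(1+M)}, t ≥ 0, and let u, v : (−1,1) → ℝ be measurable functions such that almost everywhere u ≥ −1, 0 ≤ v ≤ M, u ≤ v, and ‖v‖_{L²(−1,1)} ≤ √2·M·e^{−μ₁ t}. Then ∫_{−1}^{1} ζ₁(x)(u(x) + (α/2)u(x)²) dx ≤ π(M + M²)e^{−μ₁ t}. -/

import Mathlib

open Real Set MeasureTheory

/-- The normalized principal Dirichlet eigenfunction of `-d²/dx²` on `(-1,1)`. -/
noncomputable def zeta1 (x : ℝ) : ℝ := π / 4 * Real.cos (π * x / 2)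

set_option maxHeartbeats 1000000 in
theorem functional_decay (M α t : ℝ) (hM : 0 ≤ M) (hα₀ : 0 ≤ α)
    (hα₁ : α ≤ min 1 (2 / (1 + M))) (ht : 0 ≤ t)
    (u v : ℝ → ℝ) (hu_meas : Measurable u) (hv_meas : Measurable v)
    (hu_lb : ∀ᵐ x ∂(volume.restrict (Set.Ioo (-1 : ℝ) 1)), -1 ≤ u x)
    (hv_nonneg : ∀ᵐ x ∂(volume.restrict (Set.Ioo (-1 : ℝ) 1)), 0 ≤ v x)
    (hv_ub : ∀ᵐ x ∂(volume.restrict (Set.Ioo (-1 : ℝ) 1)), v x ≤ M)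
    (huv : ∀ᵐ x ∂(volume.restrict (Set.Ioo (-1 : ℝ) 1)), u x ≤ v x)
    (hv_L2 : IntegrableOn (fun x => v x ^ 2) (Set.Ioo (-1 : ℝ) 1))
    (hv_decay : Real.sqrt (∫ x in Set.Ioo (-1 : ℝ) 1, v x ^ 2) ≤
      Real.sqrt 2 * M * Real.exp (-(π ^ 2 / 4) * t)) :
    ∫ x in Set.Ioo (-1 : ℝ) 1, zeta1 x * (u x + α / 2 * u x ^ 2) ≤
      π * (M + M ^ 2) * Real.exp (-(π ^ 2 / 4) * t) := by
  have hπ := Real.pi_pos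
  have hα1 : α ≤ 1 := le_trans hα₁ (min_le_left _ _)
  have hα2 : α ≤ 2 / (1 + M) := le_trans hα₁ (min_le_right _ _)
  have hαM : α * (1 + M) ≤ 2 := (le_div_iff₀ (by linarith)).mp hα2
  -- bounds on zeta1
  have hzeta : ∀ x ∈ Set.Ioo (-1 : ℝ) 1, 0 ≤ zeta1 x ∧ zeta1 x ≤ π / 4 := by
    intro x hx
    obtain ⟨h1, h2⟩ := hx
    have hcos0 : 0 ≤ Real.cos (π * x / 2) := by
      apply Real.cos_nonneg_of_mem_Icc
      rw [Set.mem_Icc]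
      constructor <;> nlinarith
    have hcos1 : Real.cos (π * x / 2) ≤ 1 := Real.cos_le_one _
    refine ⟨?_, ?_⟩
    · unfold zeta1; positivity
    · unfold zeta1; nlinarith
  -- a.e. pointwise bounds on the integrand
  have key : ∀ᵐ x ∂(volume.restrict (Set.Ioo (-1 : ℝ) 1)),
      zeta1 x * (u x + α / 2 * u x ^ 2) ≤ π / 2 * v x ∧
      -(π / 4) ≤ zeta1 x * (u x + α / 2 * u x ^ 2) := by
    filter_upwards [hu_lb, hv_nonneg, hv_ub, huv, ae_restrict_mem measurableSet_Ioo]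
      with x h1 h2 h3 h4 hx
    obtain ⟨hz0, hz1⟩ := hzeta x hx
    have h5 : -1 ≤ u x + v x := by linarith
    have h6 : α * (-1) ≤ α * (u x + v x) := mul_le_mul_of_nonneg_left h5 hα₀
    have h7 : 0 ≤ (v x - u x) * (2 + α * (u x + v x)) :=
      mul_nonneg (by linarith) (by linarith)
    have hmono : u x + α / 2 * u x ^ 2 ≤ v x + α / 2 * v x ^ 2 := by nlinarith [h7]
    have hvv : v x + α / 2 * v x ^ 2 ≤ 2 * v x := by nlinarith
    constructor
    · nlinarith [mul_le_mul_of_nonneg_left (hmono.trans hvv) hz0,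
        mul_le_mul_of_nonneg_right hz1 (by linarith : (0:ℝ) ≤ 2 * v x)]
    · have hlb : -1 ≤ u x + α / 2 * u x ^ 2 := by nlinarith [sq_nonneg (u x)]
      nlinarith [mul_le_mul_of_nonneg_left hlb hz0]
  -- integrability
  have hvol : (volume (Set.Ioo (-1 : ℝ) 1)).toReal = 2 := by
    simp [Real.volume_Ioo]; norm_num
  have hconst_int : ∀ c : ℝ, IntegrableOn (fun _ => c) (Set.Ioo (-1 : ℝ) 1) := by
    intro c
    exact integrableOn_const (by simp [Real.volume_Ioo])
  have hv_int : IntegrableOn v (Set.Ioo (-1 : ℝ) 1) := by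
    apply Integrable.mono' (hconst_int M) hv_meas.aestronglyMeasurable
    filter_upwards [hv_nonneg, hv_ub] with x h1 h2
    rw [Real.norm_eq_abs, abs_of_nonneg h1]; exact h2
  have hf_int : IntegrableOn (fun x => zeta1 x * (u x + α / 2 * u x ^ 2))
      (Set.Ioo (-1 : ℝ) 1) := by
    apply Integrable.mono' (hconst_int (π / 4 + π / 2 * M))
    · apply Measurable.aestronglyMeasurable
      unfold zeta1
      exact ((measurable_const.mul ((Real.measurable_cos.comp
        ((measurable_const.mul measurable_id).div_const 2)))).mul
        (hu_meas.add ((hu_meas.pow_const 2).const_mul _)))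
    · filter_upwards [key, hv_nonneg, hv_ub] with x hk h2 h3
      obtain ⟨hk1, hk2⟩ := hk
      rw [Real.norm_eq_abs, abs_le]
      have h8 : π / 2 * v x ≤ π / 2 * M := by
        apply mul_le_mul_of_nonneg_left h3 (by positivity)
      have h9 : 0 ≤ π / 2 * M := by positivity
      constructor <;> linarith
  -- step 1 : integral comparison
  have step1 : ∫ x in Set.Ioo (-1 : ℝ) 1, zeta1 x * (u x + α / 2 * u x ^ 2) ≤
      π / 2 * ∫ x in Set.Ioo (-1 : ℝ) 1, v x := by
    rw [← MeasureTheory.integral_const_mul]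
    exact integral_mono_ae hf_int (hv_int.const_mul _) (key.mono fun x hx => hx.1)
  -- step 2 : Cauchy-Schwarz via AM-GM
  set I := ∫ x in Set.Ioo (-1 : ℝ) 1, v x ^ 2 with hI
  have hI0 : 0 ≤ I := integral_nonneg fun x => sq_nonneg _
  have step2 : ∫ x in Set.Ioo (-1 : ℝ) 1, v x ≤ Real.sqrt 2 * Real.sqrt I := by
    rcases eq_or_lt_of_le hI0 with h0 | hpos
    · -- I = 0 : v = 0 a.e.
      have hsq : (fun x => v x ^ 2) =ᵐ[volume.restrict (Set.Ioo (-1 : ℝ) 1)] 0 :=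
        (integral_eq_zero_iff_of_nonneg_ae
          (Filter.Eventually.of_forall fun x => sq_nonneg _) hv_L2).mp h0.symm
      have hv0 : v =ᵐ[volume.restrict (Set.Ioo (-1 : ℝ) 1)] 0 := by
        filter_upwards [hsq] with x hx
        have : v x ^ 2 = 0 := hx
        simpa using pow_eq_zero_iff (n := 2) (by norm_num) |>.mp this
      rw [integral_congr_ae hv0]
      simp only [Pi.zero_apply, integral_zero]
      positivity
    · set c := Real.sqrt (I / 2) with hc
      have hcpos : 0 < c := Real.sqrt_pos.mpr (by linarith)
      have hc2 : c ^ 2 = I / 2 := Real.sq_sqrt (by linarith)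
      have hpt : ∀ x, v x ≤ v x ^ 2 * (2 * c)⁻¹ + c / 2 := by
        intro x
        rw [← sub_nonneg]
        have : v x ^ 2 * (2 * c)⁻¹ + c / 2 - v x = (v x - c) ^ 2 * (2 * c)⁻¹ := by
          field_simp; ring
        rw [this]
        positivity
      have hint : ∫ x in Set.Ioo (-1 : ℝ) 1, v x ≤
          ∫ x in Set.Ioo (-1 : ℝ) 1, (v x ^ 2 * (2 * c)⁻¹ + c / 2) := by
        apply integral_mono hv_int ((hv_L2.mul_const _).add (hconst_int _)) hpt
      have heval : ∫ x in Set.Ioo (-1 : ℝ) 1, (v x ^ 2 * (2 * c)⁻¹ + c / 2) =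
          I * (2 * c)⁻¹ + c := by
        rw [integral_add (hv_L2.mul_const _) (hconst_int _), integral_mul_const,
          setIntegral_const, measureReal_def, hvol, smul_eq_mul]
        ring
      have halg : I * (2 * c)⁻¹ + c ≤ Real.sqrt 2 * Real.sqrt I := by
        have h1 : I * (2 * c)⁻¹ = c := by
          field_simp
          nlinarith
        rw [h1]
        have ha0 : 0 ≤ Real.sqrt 2 * Real.sqrt I := by positivity
        have ha2 : (Real.sqrt 2 * Real.sqrt I) ^ 2 = 2 * I := by
          rw [mul_pow, Real.sq_sqrt (by norm_num : (0:ℝ) ≤ 2), Real.sq_sqrt hI0]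
        nlinarith [sq_nonneg (Real.sqrt 2 * Real.sqrt I - 2 * c),
          sq_nonneg (Real.sqrt 2 * Real.sqrt I + 2 * c)]
      linarith [hint.trans_eq heval]
  -- combine
  have hsqrt2 : Real.sqrt 2 * Real.sqrt 2 = 2 := Real.mul_self_sqrt (by norm_num)
  have hexp : 0 ≤ Real.exp (-(π ^ 2 / 4) * t) := (Real.exp_pos _).le
  have hsI : 0 ≤ Real.sqrt I := Real.sqrt_nonneg _
  calc ∫ x in Set.Ioo (-1 : ℝ) 1, zeta1 x * (u x + α / 2 * u x ^ 2)
      ≤ π / 2 * ∫ x in Set.Ioo (-1 : ℝ) 1, v x := step1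
    _ ≤ π / 2 * (Real.sqrt 2 * Real.sqrt I) := by
        apply mul_le_mul_of_nonneg_left step2 (by positivity)
    _ ≤ π / 2 * (Real.sqrt 2 * (Real.sqrt 2 * M * Real.exp (-(π ^ 2 / 4) * t))) := by
        apply mul_le_mul_of_nonneg_left _ (by positivity)
        apply mul_le_mul_of_nonneg_left hv_decay (Real.sqrt_nonneg _)
    _ = π * M * Real.exp (-(π ^ 2 / 4) * t) := by
        rw [show Real.sqrt 2 * (Real.sqrt 2 * M * Real.exp (-(π ^ 2 / 4) * t)) =
          (Real.sqrt 2 * Real.sqrt 2) * (M * Real.exp (-(π ^ 2 / 4) * t)) by ring,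
          hsqrt2]
        ring
    _ ≤ π * (M + M ^ 2) * Real.exp (-(π ^ 2 / 4) * t) := by
        have h10 : 0 ≤ π * M ^ 2 * Real.exp (-(π ^ 2 / 4) * t) := by positivity
        nlinarith [h10]
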